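/- S1S[E] is at least as expressive as HyperQPTL: for every HyperQPTL formula φ there exists a closed S1S[E] formula ψ such that for every trace set T, T ⊨ φ if and only if T ⊨ ψ. -/

import Mathlib

set_option linter.unusedVariables false

/-- A trace over a set `AP` of atomic propositions: an infinite sequence of subsets of `AP`. -/
abbrev Trace (AP : Type) := ℕ → Set AP

/-! ### HyperQPTL -/

inductive HQPTL (AP : Type) : Type
  | atom  : AP → ℕ → HQPTL AP          -- a_π
  | prop  : ℕ → HQPTL AP               -- q
  | not   : HQPTL AP → HQPTL AP
  | or    : HQPTL AP → HQPTL AP → HQPTL AP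
  | next  : HQPTL AP → HQPTL AP
  | untl  : HQPTL AP → HQPTL AP → HQPTL AP
  | exTr  : ℕ → HQPTL AP → HQPTL AP    -- ∃π
  | allTr : ℕ → HQPTL AP → HQPTL AP    -- ∀π
  | exPr  : ℕ → HQPTL AP → HQPTL AP    -- ∃q
  | allPr : ℕ → HQPTL AP → HQPTL AP    -- ∀q

namespace HQPTL

variable {AP : Type}

/-- Satisfaction `Π,i ⊨_T φ` for HyperQPTL.  `V` assigns traces (in `T`) to trace
variables, `P` assigns to each propositional variable a trace over `{q}`
(modelled as `ℕ → Prop`). -/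
def sat (T : Set (Trace AP)) : (ℕ → Trace AP) → (ℕ → ℕ → Prop) → ℕ → HQPTL AP → Prop
  | V, P, i, atom a π => a ∈ V π i
  | V, P, i, prop q => P q i
  | V, P, i, not φ => ¬ sat T V P i φ
  | V, P, i, or φ ψ => sat T V P i φ ∨ sat T V P i ψ
  | V, P, i, next φ => sat T V P (i + 1) φ
  | V, P, i, untl φ ψ =>
      ∃ j, i ≤ j ∧ sat T V P j ψ ∧ ∀ k, i ≤ k → k < j → sat T V P k φ
  | V, P, i, exTr π φ => ∃ t ∈ T, sat T (Function.update V π t) P i φ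
  | V, P, i, allTr π φ => ∀ t ∈ T, sat T (Function.update V π t) P i φ
  | V, P, i, exPr q φ => ∃ p : ℕ → Prop, sat T V (Function.update P q p) i φ
  | V, P, i, allPr q φ => ∀ p : ℕ → Prop, sat T V (Function.update P q p) i φ

/-- `T ⊨ φ`: satisfaction at time 0 with the empty (default) assignment. -/
def models (T : Set (Trace AP)) (φ : HQPTL AP) : Prop :=
  sat T (fun _ _ => (∅ : Set AP)) (fun _ _ => False) 0 φ

/-- quantifier-free HyperQPTL formulas -/
def qfree : HQPTL AP → Prop
  | atom _ _ => True
  | prop _ => True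
  | not φ => qfree φ
  | or φ ψ => qfree φ ∧ qfree ψ
  | next φ => qfree φ
  | untl φ ψ => qfree φ ∧ qfree ψ
  | _ => False

/-- prenex form: a prefix of (trace or propositional) quantifiers followed by a
quantifier-free body; this is exactly the shape of formulas produced by the
HyperQPTL grammar. -/
def prenex : HQPTL AP → Prop
  | exTr _ φ => prenex φ
  | allTr _ φ => prenex φ
  | exPr _ φ => prenex φ
  | allPr _ φ => prenex φ
  | φ => qfree φ

/-- the ∀* fragment: only universal trace quantifiers in the prefix,
propositional quantifiers may occur arbitrarily in the prefix. -/
def allFrag : HQPTL AP → Prop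
  | allTr _ φ => allFrag φ
  | exPr _ φ => allFrag φ
  | allPr _ φ => allFrag φ
  | φ => qfree φ

/-- trailing block `Q⃗₂ ψ` of propositional quantifiers over a quantifier-free body -/
def eaFrag4 : HQPTL AP → Prop
  | exPr _ φ => eaFrag4 φ
  | allPr _ φ => eaFrag4 φ
  | φ => qfree φ

/-- `∀π′₁…∀π′ₘ Q⃗₂ ψ` -/
def eaFrag3 : HQPTL AP → Prop
  | allTr _ φ => eaFrag3 φ
  | φ => eaFrag4 φ

/-- `Q⃗₁ ∀π′₁…∀π′ₘ Q⃗₂ ψ` -/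
def eaFrag2 : HQPTL AP → Prop
  | exPr _ φ => eaFrag2 φ
  | allPr _ φ => eaFrag2 φ
  | φ => eaFrag3 φ

/-- `∃π₁…∃πₙ Q⃗₁ ∀π′₁…∀π′ₘ Q⃗₂ ψ` -/
def eaFrag1 : HQPTL AP → Prop
  | exTr _ φ => eaFrag1 φ
  | φ => eaFrag2 φ

/-- the ∃*∀* fragment: `Q⃗₀ ∃π₁…∃πₙ Q⃗₁ ∀π′₁…∀π′ₘ Q⃗₂ ψ` with `ψ` quantifier-free -/
def eaFrag : HQPTL AP → Prop
  | exPr _ φ => eaFrag φ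
  | allPr _ φ => eaFrag φ
  | φ => eaFrag1 φ

/-- a HyperQPTL formula is satisfiable if some nonempty trace set satisfies it -/
def satisfiable (φ : HQPTL AP) : Prop :=
  ∃ T : Set (Trace AP), T.Nonempty ∧ models T φ

/-- a natural injective encoding of HyperQPTL formulas over `Fin k` as naturals -/
def enc {k : ℕ} : HQPTL (Fin k) → ℕ
  | atom a π => Nat.pair 0 (Nat.pair a.val π)
  | prop q => Nat.pair 1 q
  | not φ => Nat.pair 2 (enc φ)
  | or φ ψ => Nat.pair 3 (Nat.pair (enc φ) (enc ψ))
  | next φ => Nat.pair 4 (enc φ)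
  | untl φ ψ => Nat.pair 5 (Nat.pair (enc φ) (enc ψ))
  | exTr π φ => Nat.pair 6 (Nat.pair π (enc φ))
  | allTr π φ => Nat.pair 7 (Nat.pair π (enc φ))
  | exPr q φ => Nat.pair 8 (Nat.pair q (enc φ))
  | allPr q φ => Nat.pair 9 (Nat.pair q (enc φ))

end HQPTL

/-! ### QPTL -/

inductive QPTL (AP : Type) : Type
  | atom  : AP → QPTL AP
  | prop  : ℕ → QPTL AP
  | not   : QPTL AP → QPTL AP
  | or    : QPTL AP → QPTL AP → QPTL AP
  | next  : QPTL AP → QPTL AP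
  | untl  : QPTL AP → QPTL AP → QPTL AP
  | exPr  : ℕ → QPTL AP → QPTL AP
  | allPr : ℕ → QPTL AP → QPTL AP

namespace QPTL

variable {AP : Type}

/-- QPTL satisfaction over a single trace `t`. -/
def sat (t : Trace AP) : (ℕ → ℕ → Prop) → ℕ → QPTL AP → Prop
  | P, i, atom a => a ∈ t i
  | P, i, prop q => P q i
  | P, i, not φ => ¬ sat t P i φ
  | P, i, or φ ψ => sat t P i φ ∨ sat t P i ψ
  | P, i, next φ => sat t P (i + 1) φ
  | P, i, untl φ ψ => ∃ j, i ≤ j ∧ sat t P j ψ ∧ ∀ k, i ≤ k → k < j → sat t P k φ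
  | P, i, exPr q φ => ∃ p : ℕ → Prop, sat t (Function.update P q p) i φ
  | P, i, allPr q φ => ∀ p : ℕ → Prop, sat t (Function.update P q p) i φ

def models (t : Trace AP) (φ : QPTL AP) : Prop :=
  sat t (fun _ _ => False) 0 φ

def satisfiable (φ : QPTL AP) : Prop := ∃ t : Trace AP, models t φ

end QPTL

/-- The QPTL formula obtained from a HyperQPTL formula by removing all trace
quantifiers and replacing every atom `a_π` by the atom `a`. -/
def HQPTL.strip {AP : Type} : HQPTL AP → QPTL AP
  | .atom a _ => .atom a
  | .prop q => .prop q
  | .not φ => .not φ.strip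
  | .or φ ψ => .or φ.strip ψ.strip
  | .next φ => .next φ.strip
  | .untl φ ψ => .untl φ.strip ψ.strip
  | .exTr _ φ => φ.strip
  | .allTr _ φ => φ.strip
  | .exPr q φ => .exPr q φ.strip
  | .allPr q φ => .allPr q φ.strip

/-! ### FO[<,E] -/

inductive FOE (AP : Type) : Type
  | patom : AP → ℕ → FOE AP            -- P_a(x)
  | lt    : ℕ → ℕ → FOE AP             -- x < y
  | eq    : ℕ → ℕ → FOE AP             -- x = y
  | el    : ℕ → ℕ → FOE AP             -- E(x,y)
  | not   : FOE AP → FOE AP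
  | or    : FOE AP → FOE AP → FOE AP
  | ex    : ℕ → FOE AP → FOE AP        -- ∃x

namespace FOE

variable {AP : Type}

/-- First-order satisfaction over a trace set `T`; first-order variables range
over `T × ℕ`, modelled by valuations `v : ℕ → Trace AP × ℕ` (quantifiers
restrict the first component to `T`). -/
def sat (T : Set (Trace AP)) : (ℕ → Trace AP × ℕ) → FOE AP → Prop
  | v, patom a x => a ∈ (v x).1 (v x).2
  | v, lt x y => (v x).1 = (v y).1 ∧ (v x).2 < (v y).2
  | v, eq x y => v x = v y
  | v, el x y => (v x).2 = (v y).2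
  | v, not φ => ¬ sat T v φ
  | v, or φ ψ => sat T v φ ∨ sat T v ψ
  | v, ex x φ => ∃ p : Trace AP × ℕ, p.1 ∈ T ∧ sat T (Function.update v x p) φ

def free : FOE AP → Finset ℕ
  | patom _ x => {x}
  | lt x y => {x, y}
  | eq x y => {x, y}
  | el x y => {x, y}
  | not φ => free φ
  | or φ ψ => free φ ∪ free ψ
  | ex x φ => (free φ).erase x

def closed (φ : FOE AP) : Prop := φ.free = ∅

def models (T : Set (Trace AP)) (φ : FOE AP) : Prop :=
  sat T (fun _ => (fun _ => (∅ : Set AP), 0)) φ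

end FOE

/-! ### S1S[E] -/

inductive S1STerm : Type
  | var  : ℕ → S1STerm
  | min  : ℕ → S1STerm
  | succ : S1STerm → S1STerm

namespace S1STerm

/-- value of an S1S[E] term under a first-order valuation -/
def val {AP : Type} (v : ℕ → Trace AP × ℕ) : S1STerm → Trace AP × ℕ
  | var x => v x
  | min x => ((v x).1, 0)
  | succ τ => ((val v τ).1, (val v τ).2 + 1)

def fv : S1STerm → Finset ℕ
  | var x => {x}
  | min x => {x}
  | succ τ => fv τ

def enc : S1STerm → ℕ
  | var x => Nat.pair 0 x
  | min x => Nat.pair 1 x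
  | succ τ => Nat.pair 2 τ.enc

end S1STerm

/-- S1S[E] formulas: second-order variables are either quantifiable variables
(indexed by `ℕ`, via `Sum.inl`) or the designated free variables `X_a`
for `a ∈ AP` (via `Sum.inr`). -/
inductive S1SE (AP : Type) : Type
  | mem  : S1STerm → ℕ ⊕ AP → S1SE AP   -- τ ∈ X
  | eq   : S1STerm → S1STerm → S1SE AP   -- τ = τ'
  | el   : S1STerm → S1STerm → S1SE AP   -- E(τ,τ')
  | not  : S1SE AP → S1SE AP
  | or   : S1SE AP → S1SE AP → S1SE AP
  | exFO : ℕ → S1SE AP → S1SE AP         -- ∃x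
  | exSO : ℕ → S1SE AP → S1SE AP         -- ∃X

namespace S1SE

variable {AP : Type}

/-- S1S[E] satisfaction over a trace set `T`: first-order variables range over
`T × ℕ`, second-order variables over subsets of `T × ℕ`; each designated
variable `X_a` is interpreted as `{(t,n) ∈ T × ℕ | a ∈ t[n]}`. -/
def sat (T : Set (Trace AP)) :
    (ℕ → Trace AP × ℕ) → (ℕ → Set (Trace AP × ℕ)) → S1SE AP → Prop
  | v1, v2, mem τ (Sum.inl X) => τ.val v1 ∈ v2 X
  | v1, v2, mem τ (Sum.inr a) =>
      (τ.val v1).1 ∈ T ∧ a ∈ (τ.val v1).1 (τ.val v1).2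
  | v1, v2, eq τ σ => τ.val v1 = σ.val v1
  | v1, v2, el τ σ => (τ.val v1).2 = (σ.val v1).2
  | v1, v2, not φ => ¬ sat T v1 v2 φ
  | v1, v2, or φ ψ => sat T v1 v2 φ ∨ sat T v1 v2 ψ
  | v1, v2, exFO x φ =>
      ∃ p : Trace AP × ℕ, p.1 ∈ T ∧ sat T (Function.update v1 x p) v2 φ
  | v1, v2, exSO X φ =>
      ∃ A : Set (Trace AP × ℕ), (∀ p ∈ A, p.1 ∈ T) ∧
        sat T v1 (Function.update v2 X A) φ

def freeFO : S1SE AP → Finset ℕ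
  | mem τ _ => τ.fv
  | eq τ σ => τ.fv ∪ σ.fv
  | el τ σ => τ.fv ∪ σ.fv
  | not φ => freeFO φ
  | or φ ψ => freeFO φ ∪ freeFO ψ
  | exFO x φ => (freeFO φ).erase x
  | exSO _ φ => freeFO φ

def freeSO : S1SE AP → Finset ℕ
  | mem _ (Sum.inl X) => {X}
  | mem _ (Sum.inr _) => ∅
  | eq _ _ => ∅
  | el _ _ => ∅
  | not φ => freeSO φ
  | or φ ψ => freeSO φ ∪ freeSO ψ
  | exFO _ φ => freeSO φ
  | exSO X φ => (freeSO φ).erase X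

/-- a closed S1S[E] formula: free variables only among the `X_a` -/
def closed (φ : S1SE AP) : Prop := φ.freeFO = ∅ ∧ φ.freeSO = ∅

def models (T : Set (Trace AP)) (φ : S1SE AP) : Prop :=
  sat T (fun _ => (fun _ => (∅ : Set AP), 0)) (fun _ => (∅ : Set (Trace AP × ℕ))) φ

/-- a natural injective encoding of S1S[E] formulas over `Fin k` as naturals -/
def enc {k : ℕ} : S1SE (Fin k) → ℕ
  | mem τ (Sum.inl X) => Nat.pair 0 (Nat.pair τ.enc X)
  | mem τ (Sum.inr a) => Nat.pair 1 (Nat.pair τ.enc a.val)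
  | eq τ σ => Nat.pair 2 (Nat.pair τ.enc σ.enc)
  | el τ σ => Nat.pair 3 (Nat.pair τ.enc σ.enc)
  | not φ => Nat.pair 4 φ.enc
  | or φ ψ => Nat.pair 5 (Nat.pair φ.enc ψ.enc)
  | exFO x φ => Nat.pair 6 (Nat.pair x φ.enc)
  | exSO X φ => Nat.pair 7 (Nat.pair X φ.enc)

end S1SE

/-! ### Labeled trees -/

/-- An `AP`-labeled tree: an infinite partially ordered set of nodes (given by
the strict ancestor relation `lt`) with a least element `root`, in which the
ancestors of every node are totally ordered and finitely many (so that levels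
are defined), and every node has a direct successor. -/
structure LTree (AP : Type) : Type 1 where
  node : Type
  lt : node → node → Prop
  lt_irrefl : ∀ s, ¬ lt s s
  lt_trans : ∀ a b c, lt a b → lt b c → lt a c
  root : node
  root_min : ∀ s, s = root ∨ lt root s
  anc_total : ∀ s a b, lt a s → lt b s → a = b ∨ lt a b ∨ lt b a
  anc_finite : ∀ s, {a | lt a s}.Finite
  succ_exists : ∀ s, ∃ s', lt s s' ∧ ¬ ∃ c, lt s c ∧ lt c s'
  label : node → Set AP

namespace LTree

variable {AP : Type} (T : LTree AP)

/-- `a` is the direct ancestor of `b` -/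
def DirAnc (a b : T.node) : Prop := T.lt a b ∧ ¬ ∃ c, T.lt a c ∧ T.lt c b

/-- a path: an infinite sequence of nodes, each the direct ancestor of the next -/
def IsPath (p : ℕ → T.node) : Prop := ∀ i, T.DirAnc (p i) (p (i + 1))

/-- an initial path: a path starting at the root -/
def InitPath (p : ℕ → T.node) : Prop := T.IsPath p ∧ p 0 = T.root

/-- the level of a node: its number of ancestors -/
noncomputable def level (s : T.node) : ℕ := (T.anc_finite s).toFinset.card

/-- the collection of node sets that constitute exactly one initial infinite
path of the tree -/
def pathSets : Set (Set T.node) :=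
  { A | ∃ p : ℕ → T.node, T.InitPath p ∧ A = Set.range p }

end LTree

/-- Bisimilarity of `AP`-labeled trees. -/
def Bisimilar {AP : Type} (T₁ T₂ : LTree AP) : Prop :=
  ∃ R : T₁.node → T₂.node → Prop,
    R T₁.root T₂.root ∧
    ∀ s u, R s u →
      T₁.label s = T₂.label u ∧
      (∀ s', T₁.DirAnc s s' → ∃ u', T₂.DirAnc u u' ∧ R s' u') ∧
      (∀ u', T₂.DirAnc u u' → ∃ s', T₁.DirAnc s s' ∧ R s' u')

/-! ### HyperCTL* -/

inductive HCTL (AP : Type) : Type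
  | atom : AP → ℕ → HCTL AP           -- a_π
  | not  : HCTL AP → HCTL AP
  | or   : HCTL AP → HCTL AP → HCTL AP
  | next : HCTL AP → HCTL AP
  | untl : HCTL AP → HCTL AP → HCTL AP
  | ex   : ℕ → HCTL AP → HCTL AP      -- ∃π

namespace HCTL

variable {AP : Type}

/-- HyperCTL* satisfaction `Π,i ⊨_T φ`: `V` assigns initial paths to path
variables, `ε` is the most recently assigned path. -/
def sat (T : LTree AP) : (ℕ → ℕ → T.node) → (ℕ → T.node) → ℕ → HCTL AP → Prop
  | V, ε, i, atom a π => a ∈ T.label (V π i)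
  | V, ε, i, not φ => ¬ sat T V ε i φ
  | V, ε, i, or φ ψ => sat T V ε i φ ∨ sat T V ε i ψ
  | V, ε, i, next φ => sat T V ε (i + 1) φ
  | V, ε, i, untl φ ψ =>
      ∃ j, i ≤ j ∧ sat T V ε j ψ ∧ ∀ k, i ≤ k → k < j → sat T V ε k φ
  | V, ε, i, ex π φ =>
      ∃ p : ℕ → T.node, T.InitPath p ∧ (∀ j ≤ i, p j = ε j) ∧
        sat T (Function.update V π p) p i φ

/-- `T ⊨ φ` -/
def models (T : LTree AP) (φ : HCTL AP) : Prop :=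
  ∀ p : ℕ → T.node, T.InitPath p → sat T (fun _ => p) p 0 φ

def satisfiable (φ : HCTL AP) : Prop := ∃ T : LTree AP, models T φ

def qfree : HCTL AP → Prop
  | atom _ _ => True
  | not φ => qfree φ
  | or φ ψ => qfree φ ∧ qfree ψ
  | next φ => qfree φ
  | untl φ ψ => qfree φ ∧ qfree ψ
  | ex _ _ => False

/-- a natural injective encoding of HyperCTL* formulas over `Fin k` -/
def enc {k : ℕ} : HCTL (Fin k) → ℕ
  | atom a π => Nat.pair 0 (Nat.pair a.val π)
  | not φ => Nat.pair 1 φ.enc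
  | or φ ψ => Nat.pair 2 (Nat.pair φ.enc ψ.enc)
  | next φ => Nat.pair 3 φ.enc
  | untl φ ψ => Nat.pair 4 (Nat.pair φ.enc ψ.enc)
  | ex π φ => Nat.pair 5 (Nat.pair π φ.enc)

end HCTL

/-! ### HyperCTL* in negation normal form -/

inductive NHCTL (AP : Type) : Type
  | pos  : AP → ℕ → NHCTL AP           -- a_π
  | neg  : AP → ℕ → NHCTL AP           -- ¬a_π
  | and  : NHCTL AP → NHCTL AP → NHCTL AP
  | or   : NHCTL AP → NHCTL AP → NHCTL AP
  | next : NHCTL AP → NHCTL AP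
  | untl : NHCTL AP → NHCTL AP → NHCTL AP
  | rel  : NHCTL AP → NHCTL AP → NHCTL AP   -- release
  | ex   : ℕ → NHCTL AP → NHCTL AP
  | all  : ℕ → NHCTL AP → NHCTL AP

namespace NHCTL

variable {AP : Type}

def sat (T : LTree AP) : (ℕ → ℕ → T.node) → (ℕ → T.node) → ℕ → NHCTL AP → Prop
  | V, ε, i, pos a π => a ∈ T.label (V π i)
  | V, ε, i, neg a π => a ∉ T.label (V π i)
  | V, ε, i, and φ ψ => sat T V ε i φ ∧ sat T V ε i ψ
  | V, ε, i, or φ ψ => sat T V ε i φ ∨ sat T V ε i ψ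
  | V, ε, i, next φ => sat T V ε (i + 1) φ
  | V, ε, i, untl φ ψ =>
      ∃ j, i ≤ j ∧ sat T V ε j ψ ∧ ∀ k, i ≤ k → k < j → sat T V ε k φ
  | V, ε, i, rel φ ψ =>
      (∀ j, i ≤ j → sat T V ε j ψ) ∨
      ∃ j, i ≤ j ∧ sat T V ε j φ ∧ ∀ k, i ≤ k → k ≤ j → sat T V ε k ψ
  | V, ε, i, ex π φ =>
      ∃ p : ℕ → T.node, T.InitPath p ∧ (∀ j ≤ i, p j = ε j) ∧
        sat T (Function.update V π p) p i φ
  | V, ε, i, all π φ =>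
      ∀ p : ℕ → T.node, T.InitPath p → (∀ j ≤ i, p j = ε j) →
        sat T (Function.update V π p) p i φ

def models (T : LTree AP) (φ : NHCTL AP) : Prop :=
  ∀ p : ℕ → T.node, T.InitPath p → sat T (fun _ => p) p 0 φ

def satisfiable (φ : NHCTL AP) : Prop := ∃ T : LTree AP, models T φ

/-- contains no existential path quantifier -/
def noEx : NHCTL AP → Prop
  | pos _ _ => True
  | neg _ _ => True
  | and φ ψ => noEx φ ∧ noEx ψ
  | or φ ψ => noEx φ ∧ noEx ψ
  | next φ => noEx φ
  | untl φ ψ => noEx φ ∧ noEx ψ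
  | rel φ ψ => noEx φ ∧ noEx ψ
  | ex _ _ => False
  | all _ φ => noEx φ

/-- contains no universal path quantifier -/
def noAll : NHCTL AP → Prop
  | pos _ _ => True
  | neg _ _ => True
  | and φ ψ => noAll φ ∧ noAll ψ
  | or φ ψ => noAll φ ∧ noAll ψ
  | next φ => noAll φ
  | untl φ ψ => noAll φ ∧ noAll ψ
  | rel φ ψ => noAll φ ∧ noAll ψ
  | ex _ φ => noAll φ
  | all _ _ => False

/-- quantifier-free -/
def qf : NHCTL AP → Prop
  | pos _ _ => True
  | neg _ _ => True
  | and φ ψ => qf φ ∧ qf ψ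
  | or φ ψ => qf φ ∧ qf ψ
  | next φ => qf φ
  | untl φ ψ => qf φ ∧ qf ψ
  | rel φ ψ => qf φ ∧ qf ψ
  | ex _ _ => False
  | all _ _ => False

/-- the ∃*∀* fragment: no existential path quantifier occurs in the scope of a
universal path quantifier -/
def eaFrag : NHCTL AP → Prop
  | pos _ _ => True
  | neg _ _ => True
  | and φ ψ => eaFrag φ ∧ eaFrag ψ
  | or φ ψ => eaFrag φ ∧ eaFrag ψ
  | next φ => eaFrag φ
  | untl φ ψ => eaFrag φ ∧ eaFrag ψ
  | rel φ ψ => eaFrag φ ∧ eaFrag ψ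
  | ex _ φ => eaFrag φ
  | all _ φ => noEx φ

/-- a natural injective encoding of NNF HyperCTL* formulas over `Fin k` -/
def enc {k : ℕ} : NHCTL (Fin k) → ℕ
  | pos a π => Nat.pair 0 (Nat.pair a.val π)
  | neg a π => Nat.pair 1 (Nat.pair a.val π)
  | and φ ψ => Nat.pair 2 (Nat.pair φ.enc ψ.enc)
  | or φ ψ => Nat.pair 3 (Nat.pair φ.enc ψ.enc)
  | next φ => Nat.pair 4 φ.enc
  | untl φ ψ => Nat.pair 5 (Nat.pair φ.enc ψ.enc)
  | rel φ ψ => Nat.pair 6 (Nat.pair φ.enc ψ.enc)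
  | ex π φ => Nat.pair 7 (Nat.pair π φ.enc)
  | all π φ => Nat.pair 8 (Nat.pair π φ.enc)

end NHCTL

/-! ### MSO[E] and MPL[E] over labeled trees -/

inductive MSOE (AP : Type) : Type
  | patom : AP → ℕ → MSOE AP           -- P_a(x)
  | lt    : ℕ → ℕ → MSOE AP            -- x < y  (proper ancestor)
  | eq    : ℕ → ℕ → MSOE AP            -- x = y
  | el    : ℕ → ℕ → MSOE AP            -- E(x,y)
  | mem   : ℕ → ℕ → MSOE AP            -- x ∈ X
  | not   : MSOE AP → MSOE AP
  | or    : MSOE AP → MSOE AP → MSOE AP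
  | exFO  : ℕ → MSOE AP → MSOE AP      -- ∃x
  | exSO  : ℕ → MSOE AP → MSOE AP      -- ∃X

namespace MSOE

variable {AP : Type}

/-- satisfaction over a labeled tree, where second-order quantifiers range over
the collection `SO` of admissible node sets -/
def sat (T : LTree AP) (SO : Set (Set T.node)) :
    (ℕ → T.node) → (ℕ → Set T.node) → MSOE AP → Prop
  | v1, v2, patom a x => a ∈ T.label (v1 x)
  | v1, v2, lt x y => T.lt (v1 x) (v1 y)
  | v1, v2, eq x y => v1 x = v1 y
  | v1, v2, el x y => T.level (v1 x) = T.level (v1 y)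
  | v1, v2, mem x X => v1 x ∈ v2 X
  | v1, v2, not φ => ¬ sat T SO v1 v2 φ
  | v1, v2, or φ ψ => sat T SO v1 v2 φ ∨ sat T SO v1 v2 ψ
  | v1, v2, exFO x φ => ∃ s : T.node, sat T SO (Function.update v1 x s) v2 φ
  | v1, v2, exSO X φ => ∃ A ∈ SO, sat T SO v1 (Function.update v2 X A) φ

def freeFO : MSOE AP → Finset ℕ
  | patom _ x => {x}
  | lt x y => {x, y}
  | eq x y => {x, y}
  | el x y => {x, y}
  | mem x _ => {x}
  | not φ => freeFO φ
  | or φ ψ => freeFO φ ∪ freeFO ψ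
  | exFO x φ => (freeFO φ).erase x
  | exSO _ φ => freeFO φ

def freeSO : MSOE AP → Finset ℕ
  | patom _ _ => ∅
  | lt _ _ => ∅
  | eq _ _ => ∅
  | el _ _ => ∅
  | mem _ X => {X}
  | not φ => freeSO φ
  | or φ ψ => freeSO φ ∪ freeSO ψ
  | exFO _ φ => freeSO φ
  | exSO X φ => (freeSO φ).erase X

def closed (φ : MSOE AP) : Prop := φ.freeFO = ∅ ∧ φ.freeSO = ∅

/-- `T ⊨ φ` with MPL[E] semantics: second-order quantification restricted to
sets of nodes constituting exactly one initial infinite path -/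
def modelsMPL (T : LTree AP) (φ : MSOE AP) : Prop :=
  sat T T.pathSets (fun _ => T.root) (fun _ => (∅ : Set T.node)) φ

/-- `T ⊨ φ` with full MSO[E] semantics: second-order quantification over
arbitrary sets of nodes -/
def modelsMSO (T : LTree AP) (φ : MSOE AP) : Prop :=
  sat T Set.univ (fun _ => T.root) (fun _ => (∅ : Set T.node)) φ

end MSOE

/-! ### HyperQCTL* -/

inductive HQCTL (AP : Type) : Type
  | atom  : AP → ℕ → HQCTL AP          -- a_π
  | qatom : ℕ → ℕ → HQCTL AP           -- q_π
  | not   : HQCTL AP → HQCTL AP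
  | or    : HQCTL AP → HQCTL AP → HQCTL AP
  | next  : HQCTL AP → HQCTL AP
  | untl  : HQCTL AP → HQCTL AP → HQCTL AP
  | ex    : ℕ → HQCTL AP → HQCTL AP    -- ∃π
  | exPr  : ℕ → HQCTL AP → HQCTL AP    -- ∃q

namespace HQCTL

variable {AP : Type}

/-- HyperQCTL* satisfaction: `Q` records, for every quantified proposition, the
set of tree nodes currently labeled by it (a relabeling of the tree). -/
def sat (T : LTree AP) : (ℕ → Set T.node) → (ℕ → ℕ → T.node) → (ℕ → T.node) →
    ℕ → HQCTL AP → Prop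
  | Q, V, ε, i, atom a π => a ∈ T.label (V π i)
  | Q, V, ε, i, qatom q π => V π i ∈ Q q
  | Q, V, ε, i, not φ => ¬ sat T Q V ε i φ
  | Q, V, ε, i, or φ ψ => sat T Q V ε i φ ∨ sat T Q V ε i ψ
  | Q, V, ε, i, next φ => sat T Q V ε (i + 1) φ
  | Q, V, ε, i, untl φ ψ =>
      ∃ j, i ≤ j ∧ sat T Q V ε j ψ ∧ ∀ k, i ≤ k → k < j → sat T Q V ε k φ
  | Q, V, ε, i, ex π φ =>
      ∃ p : ℕ → T.node, T.InitPath p ∧ (∀ j ≤ i, p j = ε j) ∧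
        sat T Q (Function.update V π p) p i φ
  | Q, V, ε, i, exPr q φ =>
      ∃ A : Set T.node, sat T (Function.update Q q A) V ε i φ

def models (T : LTree AP) (φ : HQCTL AP) : Prop :=
  ∀ p : ℕ → T.node, T.InitPath p →
    sat T (fun _ => (∅ : Set T.node)) (fun _ => p) p 0 φ

end HQCTL


/-! ### Auxiliary development for Statement 2 -/

namespace S1SEaux

open S1STerm S1SE

variable {AP : Type}

/-- conjunction, defined from `not`/`or` -/
@[irreducible] def aand (φ ψ : S1SE AP) : S1SE AP := .not (.or (.not φ) (.not ψ))

@[simp] lemma sat_aand (T : Set (Trace AP)) (v1 v2) (φ ψ : S1SE AP) :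
    S1SE.sat T v1 v2 (aand φ ψ) ↔ S1SE.sat T v1 v2 φ ∧ S1SE.sat T v1 v2 ψ := by
  unfold aand; simp only [S1SE.sat]; tauto

@[simp] lemma freeFO_aand (φ ψ : S1SE AP) :
    (aand φ ψ).freeFO = φ.freeFO ∪ ψ.freeFO := by
  unfold aand; simp [S1SE.freeFO]

@[simp] lemma freeSO_aand (φ ψ : S1SE AP) :
    (aand φ ψ).freeSO = φ.freeSO ∪ ψ.freeSO := by
  unfold aand; simp [S1SE.freeSO]

/-- iterated successor term -/
def sk : ℕ → S1STerm → S1STerm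
  | 0, τ => τ
  | k+1, τ => .succ (sk k τ)

@[simp] lemma sk_val (v : ℕ → Trace AP × ℕ) (k : ℕ) (τ : S1STerm) :
    (sk k τ).val v = ((τ.val v).1, (τ.val v).2 + k) := by
  induction k with
  | zero => simp [sk]
  | succ k ih => simp [sk, S1STerm.val, ih]; ring

@[simp] lemma sk_fv (k : ℕ) (τ : S1STerm) : (sk k τ).fv = τ.fv := by
  induction k with
  | zero => rfl
  | succ k ih => simp [sk, S1STerm.fv, ih]

lemma val_update {v1 : ℕ → Trace AP × ℕ} {y : ℕ} {p : Trace AP × ℕ} {τ : S1STerm}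
    (h : y ∉ τ.fv) : τ.val (Function.update v1 y p) = τ.val v1 := by
  induction τ with
  | var x =>
      simp [S1STerm.fv] at h
      simp [S1STerm.val, Function.update_of_ne (by omega : x ≠ y)]
  | min x =>
      simp [S1STerm.fv] at h
      simp [S1STerm.val, Function.update_of_ne (by omega : x ≠ y)]
  | succ τ ih =>
      simp [S1STerm.fv] at h
      simp [S1STerm.val, ih h]

/-- `leq τ σ`: σ lies on the same trace as τ, at an equal-or-later time -/
@[irreducible] def leq (τ σ : S1STerm) (y : ℕ) : S1SE AP :=
  .not (.exSO 1 (aand (.mem τ (.inl 1))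
    (aand (.not (.exFO y (aand (.mem (.var y) (.inl 1))
        (.not (.mem (.succ (.var y)) (.inl 1))))))
      (.not (.mem σ (.inl 1))))))

lemma leq_freeFO (τ σ : S1STerm) (y : ℕ) :
    (leq τ σ y : S1SE AP).freeFO = τ.fv ∪ σ.fv := by
  unfold leq; simp [S1SE.freeFO, S1STerm.fv]

lemma leq_freeSO (τ σ : S1STerm) (y : ℕ) : (leq τ σ y : S1SE AP).freeSO = ∅ := by
  unfold leq; simp [S1SE.freeSO]

lemma leq_sat (T : Set (Trace AP)) (v1 : ℕ → Trace AP × ℕ) (v2) (τ σ : S1STerm)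
    (y : ℕ) (hτ : (τ.val v1).1 ∈ T) :
    S1SE.sat T v1 v2 (leq τ σ y) ↔
      (σ.val v1).1 = (τ.val v1).1 ∧ (τ.val v1).2 ≤ (σ.val v1).2 := by
  unfold leq
  simp only [S1SE.sat, sat_aand, S1STerm.val, Function.update_self]
  constructor
  · intro h
    by_contra hc
    apply h
    refine ⟨{pr | pr.1 = (τ.val v1).1 ∧ (τ.val v1).2 ≤ pr.2}, ?_, ?_, ?_, ?_⟩
    · rintro p ⟨h1, -⟩; rw [h1]; exact hτ
    · exact ⟨rfl, le_refl _⟩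
    · rintro ⟨p, hpT, hpA, hps⟩
      exact hps ⟨hpA.1, Nat.le_succ_of_le hpA.2⟩
    · intro hσ; exact hc ⟨hσ.1, hσ.2⟩
  · rintro ⟨h1, h2⟩ ⟨A, hAT, hτA, hclos, hσA⟩
    apply hσA
    have key : ∀ d : ℕ, ((τ.val v1).1, (τ.val v1).2 + d) ∈ A := by
      intro d
      induction d with
      | zero => simpa using hτA
      | succ d ih =>
          by_contra hne
          exact hclos ⟨((τ.val v1).1, (τ.val v1).2 + d), hAT _ ih, ih, hne⟩
    have := key ((σ.val v1).2 - (τ.val v1).2)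
    have heq : ((τ.val v1).1, (τ.val v1).2 + ((σ.val v1).2 - (τ.val v1).2))
        = σ.val v1 := by
      rw [← h1]; congr 1; omega
    rwa [heq] at this

/-- a canonical false formula (with free variable 0, bound by the clock) -/
def ffF : S1SE AP := .not (.eq (.var 0) (.var 0))

@[simp] lemma sat_ffF (T : Set (Trace AP)) (v1 v2) : ¬ S1SE.sat T v1 v2 (ffF) := by
  simp [ffF, S1SE.sat]

/-- translation of the quantifier-free body; trace variable `π` lives in FO
variable `2π+1`, propositional variable `q` in SO variable `2q`, the current
time is the value of the term `S^k(var (2b))`, and `f` is a freshness bound. -/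
def trB (B Bq : Finset ℕ) : HQPTL AP → ℕ → ℕ → ℕ → S1SE AP
  | .atom a π, b, k, f =>
      if π ∈ B then
        .exFO (2*f) (aand (.eq (.min (2*f)) (.var (2*π+1)))
          (aand (.el (.var (2*f)) (sk k (.var (2*b)))) (.mem (.var (2*f)) (.inr a))))
      else ffF
  | .prop q, b, k, f =>
      if q ∈ Bq then
        .exFO (2*f) (aand (.el (.var (2*f)) (sk k (.var (2*b))))
          (.mem (.var (2*f)) (.inl (2*q))))
      else ffF
  | .not φ, b, k, f => .not (trB B Bq φ b k f)
  | .or φ ψ, b, k, f => .or (trB B Bq φ b k f) (trB B Bq ψ b k f)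
  | .next φ, b, k, f => trB B Bq φ b (k+1) f
  | .untl φ ψ, b, k, f =>
      .exFO (2*f) (aand (leq (sk k (.var (2*b))) (.var (2*f)) (2*(f+2)))
        (aand (trB B Bq ψ f 0 (f+3))
          (.not (.exFO (2*(f+1)) (aand (leq (sk k (.var (2*b))) (.var (2*(f+1))) (2*(f+2)))
            (aand (leq (.succ (.var (2*(f+1)))) (.var (2*f)) (2*(f+2)))
              (.not (trB B Bq φ (f+1) 0 (f+3)))))))))
  | .exTr _ _, _, _, _ => ffF
  | .allTr _ _, _, _, _ => ffF
  | .exPr _ _, _, _, _ => ffF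
  | .allPr _ _, _, _, _ => ffF

lemma trB_freeFO (B Bq : Finset ℕ) (φ : HQPTL AP) :
    ∀ b k f, b < f →
      ∀ x ∈ (trB B Bq φ b k f).freeFO, x = 0 ∨ x = 2*b ∨ ∃ π ∈ B, x = 2*π+1 := by
  induction φ with
  | atom a π =>
      intro b k f hbf x hx
      by_cases hπ : π ∈ B
      · simp [trB, hπ, S1SE.freeFO, S1STerm.fv] at hx
        rcases hx with ⟨hne, h | h | h⟩
        · exact Or.inr (Or.inl h)
        · exact Or.inr (Or.inr ⟨π, hπ, h⟩)
        · exact absurd h hne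
      · simp [trB, hπ, ffF, S1SE.freeFO, S1STerm.fv] at hx
        exact Or.inl (by omega)
  | prop q =>
      intro b k f hbf x hx
      by_cases hq : q ∈ Bq
      · simp [trB, hq, S1SE.freeFO, S1STerm.fv] at hx
        rcases hx with ⟨hne, h | h⟩
        · exact Or.inr (Or.inl h)
        · exact absurd h hne
      · simp [trB, hq, ffF, S1SE.freeFO, S1STerm.fv] at hx
        exact Or.inl (by omega)
  | not φ ih => intro b k f hbf x hx; exact ih b k f hbf x hx
  | or φ ψ ih1 ih2 =>
      intro b k f hbf x hx
      simp only [trB, S1SE.freeFO, Finset.mem_union] at hx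
      rcases hx with h | h
      · exact ih1 b k f hbf x h
      · exact ih2 b k f hbf x h
  | next φ ih => intro b k f hbf x hx; exact ih b (k+1) f hbf x hx
  | untl φ ψ ih1 ih2 =>
      intro b k f hbf x hx
      simp only [trB, S1SE.freeFO, freeFO_aand, Finset.mem_erase, Finset.mem_union,
        leq_freeFO, sk_fv, S1STerm.fv, Finset.mem_singleton] at hx
      rcases hx with ⟨hne, (h | h) | h | ⟨hne2, (h | h) | (h | h) | h⟩⟩
      · exact Or.inr (Or.inl h)
      · exact absurd h hne
      · rcases ih2 f 0 (f+3) (by omega) x h with h' | h' | h'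
        · exact Or.inl h'
        · exact absurd h' hne
        · exact Or.inr (Or.inr h')
      · exact Or.inr (Or.inl h)
      · exact absurd h hne2
      · exact absurd h hne2
      · exact absurd h hne
      · rcases ih1 (f+1) 0 (f+3) (by omega) x h with h' | h' | h'
        · exact Or.inl h'
        · exact absurd h' hne2
        · exact Or.inr (Or.inr h')
  | exTr π φ ih =>
      intro b k f hbf x hx; simp [trB, ffF, S1SE.freeFO, S1STerm.fv] at hx
      exact Or.inl (by omega)
  | allTr π φ ih =>
      intro b k f hbf x hx; simp [trB, ffF, S1SE.freeFO, S1STerm.fv] at hx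
      exact Or.inl (by omega)
  | exPr q φ ih =>
      intro b k f hbf x hx; simp [trB, ffF, S1SE.freeFO, S1STerm.fv] at hx
      exact Or.inl (by omega)
  | allPr q φ ih =>
      intro b k f hbf x hx; simp [trB, ffF, S1SE.freeFO, S1STerm.fv] at hx
      exact Or.inl (by omega)

lemma trB_freeSO (B Bq : Finset ℕ) (φ : HQPTL AP) :
    ∀ b k f, ∀ X ∈ (trB B Bq φ b k f).freeSO, ∃ q ∈ Bq, X = 2*q := by
  induction φ with
  | atom a π =>
      intro b k f X hX
      by_cases hπ : π ∈ B <;> simp [trB, hπ, ffF, S1SE.freeSO] at hX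
  | prop q =>
      intro b k f X hX
      by_cases hq : q ∈ Bq
      · simp [trB, hq, S1SE.freeSO] at hX
        exact ⟨q, hq, hX⟩
      · simp [trB, hq, ffF, S1SE.freeSO] at hX
  | not φ ih => intro b k f X hX; exact ih b k f X hX
  | or φ ψ ih1 ih2 =>
      intro b k f X hX
      simp only [trB, S1SE.freeSO, Finset.mem_union] at hX
      rcases hX with h | h
      · exact ih1 b k f X h
      · exact ih2 b k f X h
  | next φ ih => intro b k f X hX; exact ih b (k+1) f X hX
  | untl φ ψ ih1 ih2 =>
      intro b k f X hX
      simp only [trB, S1SE.freeSO, freeSO_aand, Finset.mem_union, leq_freeSO,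
        Finset.notMem_empty, false_or, or_false] at hX
      rcases hX with h | h
      · exact ih2 f 0 (f+3) X h
      · exact ih1 (f+1) 0 (f+3) X h
  | exTr π φ ih => intro b k f X hX; simp [trB, ffF, S1SE.freeSO] at hX
  | allTr π φ ih => intro b k f X hX; simp [trB, ffF, S1SE.freeSO] at hX
  | exPr q φ ih => intro b k f X hX; simp [trB, ffF, S1SE.freeSO] at hX
  | allPr q φ ih => intro b k f X hX; simp [trB, ffF, S1SE.freeSO] at hX

lemma trB_sat (T : Set (Trace AP)) (B Bq : Finset ℕ) (V : ℕ → Trace AP)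
    (P : ℕ → ℕ → Prop)
    (hBV : ∀ π ∈ B, V π ∈ T) (hBc : ∀ π ∉ B, V π = fun _ => (∅ : Set AP))
    (hQc : ∀ q ∉ Bq, ∀ n, ¬ P q n) :
    ∀ φ : HQPTL AP, φ.qfree → ∀ b k f, b < f → ∀ (i : ℕ) v1 v2,
      (v1 (2*b)).1 ∈ T → i = (v1 (2*b)).2 + k →
      (∀ π ∈ B, v1 (2*π+1) = (V π, 0)) →
      (∀ q ∈ Bq, ∀ n, P q n ↔ ∃ pr ∈ v2 (2*q), pr.1 ∈ T ∧ pr.2 = n) →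
      (HQPTL.sat T V P i φ ↔ S1SE.sat T v1 v2 (trB B Bq φ b k f)) := by
  intro φ
  induction φ with
  | atom a π =>
      intro _ b k f hbf i v1 v2 hcT hi hB hQ
      by_cases hπ : π ∈ B
      · have h1 : ∀ p : Trace AP × ℕ, Function.update v1 (2*f) p (2*π+1) = v1 (2*π+1) :=
          fun p => Function.update_of_ne (by omega) _ _
        have h2 : ∀ p : Trace AP × ℕ, Function.update v1 (2*f) p (2*b) = v1 (2*b) :=
          fun p => Function.update_of_ne (by omega) _ _
        simp only [trB, if_pos hπ, HQPTL.sat, S1SE.sat, sat_aand, S1STerm.val,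
          Function.update_self, h1, h2, sk_val, hB π hπ]
        constructor
        · intro ha
          exact ⟨(V π, i), hBV π hπ, rfl, by omega, hBV π hπ, ha⟩
        · rintro ⟨p, hpT, heq, hel, -, ha⟩
          have hp1 : p.1 = V π := congrArg Prod.fst heq
          have hp2 : p.2 = i := by omega
          rwa [hp1, hp2] at ha
      · simp only [trB, if_neg hπ, HQPTL.sat]
        rw [hBc π hπ]
        simp [ffF, S1SE.sat]
  | prop q =>
      intro _ b k f hbf i v1 v2 hcT hi hB hQ
      by_cases hq : q ∈ Bq
      · have h2 : ∀ p : Trace AP × ℕ, Function.update v1 (2*f) p (2*b) = v1 (2*b) :=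
          fun p => Function.update_of_ne (by omega) _ _
        simp only [trB, if_pos hq, HQPTL.sat, S1SE.sat, sat_aand, S1STerm.val,
          Function.update_self, h2, sk_val]
        rw [hQ q hq i]
        constructor
        · rintro ⟨pr, hprA, hprT, hpr2⟩
          exact ⟨pr, hprT, by omega, hprA⟩
        · rintro ⟨pr, hprT, hel, hmem⟩
          exact ⟨pr, hmem, hprT, by omega⟩
      · simp only [trB, if_neg hq, HQPTL.sat]
        have := hQc q hq i
        simp [ffF, S1SE.sat, this]
  | not φ ih =>
      intro hqf b k f hbf i v1 v2 hcT hi hB hQ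
      simp only [trB, HQPTL.sat, S1SE.sat]
      rw [ih hqf b k f hbf i v1 v2 hcT hi hB hQ]
  | or φ ψ ih1 ih2 =>
      intro hqf b k f hbf i v1 v2 hcT hi hB hQ
      simp only [trB, HQPTL.sat, S1SE.sat]
      rw [ih1 hqf.1 b k f hbf i v1 v2 hcT hi hB hQ,
        ih2 hqf.2 b k f hbf i v1 v2 hcT hi hB hQ]
  | next φ ih =>
      intro hqf b k f hbf i v1 v2 hcT hi hB hQ
      simp only [trB, HQPTL.sat]
      exact ih hqf b (k+1) f hbf (i+1) v1 v2 hcT (by omega) hB hQ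
  | untl φ ψ ih1 ih2 =>
      intro hqf b k f hbf i v1 v2 hcT hi hB hQ
      simp only [trB, HQPTL.sat, S1SE.sat, sat_aand]
      constructor
      · rintro ⟨j, hij, hsatψ, hall⟩
        refine ⟨((v1 (2*b)).1, j), hcT, ?_, ?_, ?_⟩
        · have e1 : Function.update v1 (2*f) ((v1 (2*b)).1, j) (2*b) = v1 (2*b) :=
            Function.update_of_ne (by omega) _ _
          rw [leq_sat T _ _ _ _ _ (by simp only [sk_val, S1STerm.val, e1]; exact hcT)]
          simp only [S1STerm.val, sk_val, e1, Function.update_self]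
          exact ⟨by trivial, by omega⟩
        · have e1 : Function.update v1 (2*f) ((v1 (2*b)).1, j) (2*b) = v1 (2*b) :=
            Function.update_of_ne (by omega) _ _
          rw [← ih2 hqf.2 f 0 (f+3) (by omega) j
              (Function.update v1 (2*f) ((v1 (2*b)).1, j)) v2
              (by rw [Function.update_self]; exact hcT)
              (by rw [Function.update_self]; omega)
              (fun π hπ => by
                rw [Function.update_of_ne (by omega : 2*π+1 ≠ 2*f)]
                exact hB π hπ) hQ]
          exact hsatψ
        · rintro ⟨p, hpT, hle1, hle2, hnsat⟩
          have e1 : Function.update (Function.update v1 (2*f) ((v1 (2*b)).1, j))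
              (2*(f+1)) p (2*b) = v1 (2*b) := by
            rw [Function.update_of_ne (by omega), Function.update_of_ne (by omega)]
          have e2 : Function.update (Function.update v1 (2*f) ((v1 (2*b)).1, j))
              (2*(f+1)) p (2*f) = ((v1 (2*b)).1, j) := by
            rw [Function.update_of_ne (by omega), Function.update_self]
          rw [leq_sat T _ _ _ _ _ (by simp only [sk_val, S1STerm.val, e1]; exact hcT)] at hle1
          simp only [S1STerm.val, sk_val, e1, Function.update_self] at hle1
          rw [leq_sat T _ _ _ _ _ (by
            simp only [S1STerm.val, Function.update_self]; rw [hle1.1]; exact hcT)] at hle2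
          simp only [S1STerm.val, Function.update_self, e2] at hle2
          apply hnsat
          rw [← ih1 hqf.1 (f+1) 0 (f+3) (by omega) p.2
              (Function.update (Function.update v1 (2*f) ((v1 (2*b)).1, j)) (2*(f+1)) p) v2
              (by rw [Function.update_self, hle1.1]; exact hcT)
              (by rw [Function.update_self]; omega)
              (fun π hπ => by
                rw [Function.update_of_ne (by omega : 2*π+1 ≠ 2*(f+1)),
                  Function.update_of_ne (by omega : 2*π+1 ≠ 2*f)]
                exact hB π hπ) hQ]
          exact hall p.2 (by omega) (by omega)
      · rintro ⟨p, hpT, hle, hsatψ, hnex⟩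
        have e1 : Function.update v1 (2*f) p (2*b) = v1 (2*b) :=
          Function.update_of_ne (by omega) _ _
        rw [leq_sat T _ _ _ _ _ (by simp only [sk_val, S1STerm.val, e1]; exact hcT)] at hle
        simp only [S1STerm.val, sk_val, e1, Function.update_self] at hle
        refine ⟨p.2, by omega, ?_, ?_⟩
        · rw [ih2 hqf.2 f 0 (f+3) (by omega) p.2 (Function.update v1 (2*f) p) v2
            (by rw [Function.update_self]; exact hpT)
            (by rw [Function.update_self]; omega)
            (fun π hπ => by
              rw [Function.update_of_ne (by omega : 2*π+1 ≠ 2*f)]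
              exact hB π hπ) hQ]
          exact hsatψ
        · intro m him hmj
          by_contra hnsat
          apply hnex
          have e2 : Function.update (Function.update v1 (2*f) p) (2*(f+1))
              ((v1 (2*b)).1, m) (2*b) = v1 (2*b) := by
            rw [Function.update_of_ne (by omega), Function.update_of_ne (by omega)]
          have e3 : Function.update (Function.update v1 (2*f) p) (2*(f+1))
              ((v1 (2*b)).1, m) (2*f) = p := by
            rw [Function.update_of_ne (by omega), Function.update_self]
          refine ⟨((v1 (2*b)).1, m), hcT, ?_, ?_, ?_⟩
          · rw [leq_sat T _ _ _ _ _ (by simp only [sk_val, S1STerm.val, e2]; exact hcT)]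
            simp only [S1STerm.val, sk_val, e2, Function.update_self]
            exact ⟨by trivial, by omega⟩
          · rw [leq_sat T _ _ _ _ _ (by
              simp only [S1STerm.val, Function.update_self]; exact hcT)]
            simp only [S1STerm.val, Function.update_self, e3]
            exact ⟨by simp [hle.1], by omega⟩
          · intro hsat
            apply hnsat
            rw [← ih1 hqf.1 (f+1) 0 (f+3) (by omega) m
                (Function.update (Function.update v1 (2*f) p) (2*(f+1)) ((v1 (2*b)).1, m)) v2
                (by rw [Function.update_self]; exact hcT)
                (by rw [Function.update_self]; omega)
                (fun π hπ => by
                  rw [Function.update_of_ne (by omega : 2*π+1 ≠ 2*(f+1)),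
                    Function.update_of_ne (by omega : 2*π+1 ≠ 2*f)]
                  exact hB π hπ) hQ] at hsat
            exact hsat
  | exTr π φ ih => intro hqf; exact absurd hqf (by simp [HQPTL.qfree])
  | allTr π φ ih => intro hqf; exact absurd hqf (by simp [HQPTL.qfree])
  | exPr q φ ih => intro hqf; exact absurd hqf (by simp [HQPTL.qfree])
  | allPr q φ ih => intro hqf; exact absurd hqf (by simp [HQPTL.qfree])

/-- translation of the quantifier prefix; FO variable 0 is the clock, pinned
at time 0 of some trace of `T`. -/
def trPre : HQPTL AP → Finset ℕ → Finset ℕ → S1SE AP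
  | .exTr π φ, B, Bq =>
      .exFO (2*π+1) (aand (.eq (.var (2*π+1)) (.min (2*π+1)))
        (trPre φ (insert π B) Bq))
  | .allTr π φ, B, Bq =>
      .not (.exFO (2*π+1) (aand (.eq (.var (2*π+1)) (.min (2*π+1)))
        (.not (trPre φ (insert π B) Bq))))
  | .exPr q φ, B, Bq => .exSO (2*q) (trPre φ B (insert q Bq))
  | .allPr q φ, B, Bq => .not (.exSO (2*q) (.not (trPre φ B (insert q Bq))))
  | .atom a π, B, Bq => trB B Bq (.atom a π) 0 0 1
  | .prop q, B, Bq => trB B Bq (.prop q) 0 0 1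
  | .not φ, B, Bq => trB B Bq (.not φ) 0 0 1
  | .or φ ψ, B, Bq => trB B Bq (.or φ ψ) 0 0 1
  | .next φ, B, Bq => trB B Bq (.next φ) 0 0 1
  | .untl φ ψ, B, Bq => trB B Bq (.untl φ ψ) 0 0 1

lemma trPre_freeFO (φ : HQPTL AP) :
    ∀ B Bq, ∀ x ∈ (trPre φ B Bq).freeFO, x = 0 ∨ ∃ π ∈ B, x = 2*π+1 := by
  have hbody : ∀ (φ : HQPTL AP) B Bq, ∀ x ∈ (trB B Bq φ 0 0 1).freeFO,
      x = 0 ∨ ∃ π ∈ B, x = 2*π+1 := by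
    intro φ B Bq x hx
    rcases trB_freeFO B Bq φ 0 0 1 (by omega) x hx with h | h | h
    · exact Or.inl h
    · exact Or.inl (by omega)
    · exact Or.inr h
  induction φ with
  | exTr π φ ih =>
      intro B Bq x hx
      simp only [trPre, S1SE.freeFO, freeFO_aand, Finset.mem_erase, Finset.mem_union,
        S1STerm.fv, Finset.mem_singleton] at hx
      rcases hx with ⟨hne, (h | h) | h⟩
      · exact absurd h hne
      · exact absurd h hne
      · rcases ih (insert π B) Bq x h with h' | ⟨π', hπ', h'⟩
        · exact Or.inl h'
        · rcases Finset.mem_insert.mp hπ' with h'' | h''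
          · exact absurd (h'' ▸ h') hne
          · exact Or.inr ⟨π', h'', h'⟩
  | allTr π φ ih =>
      intro B Bq x hx
      simp only [trPre, S1SE.freeFO, freeFO_aand, Finset.mem_erase, Finset.mem_union,
        S1STerm.fv, Finset.mem_singleton] at hx
      rcases hx with ⟨hne, (h | h) | h⟩
      · exact absurd h hne
      · exact absurd h hne
      · rcases ih (insert π B) Bq x h with h' | ⟨π', hπ', h'⟩
        · exact Or.inl h'
        · rcases Finset.mem_insert.mp hπ' with h'' | h''
          · exact absurd (h'' ▸ h') hne
          · exact Or.inr ⟨π', h'', h'⟩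
  | exPr q φ ih =>
      intro B Bq x hx
      simp only [trPre, S1SE.freeFO] at hx
      exact ih B (insert q Bq) x hx
  | allPr q φ ih =>
      intro B Bq x hx
      simp only [trPre, S1SE.freeFO] at hx
      exact ih B (insert q Bq) x hx
  | atom a π => intro B Bq; exact hbody _ B Bq
  | prop q => intro B Bq; exact hbody _ B Bq
  | not φ ih => intro B Bq; exact hbody _ B Bq
  | or φ ψ ih1 ih2 => intro B Bq; exact hbody _ B Bq
  | next φ ih => intro B Bq; exact hbody _ B Bq
  | untl φ ψ ih1 ih2 => intro B Bq; exact hbody _ B Bq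

lemma trPre_freeSO (φ : HQPTL AP) :
    ∀ B Bq, ∀ X ∈ (trPre φ B Bq).freeSO, ∃ q ∈ Bq, X = 2*q := by
  induction φ with
  | exTr π φ ih =>
      intro B Bq X hX
      simp only [trPre, S1SE.freeSO, freeSO_aand, Finset.mem_union,
        Finset.notMem_empty, false_or] at hX
      exact ih (insert π B) Bq X hX
  | allTr π φ ih =>
      intro B Bq X hX
      simp only [trPre, S1SE.freeSO, freeSO_aand, Finset.mem_union,
        Finset.notMem_empty, false_or] at hX
      exact ih (insert π B) Bq X hX
  | exPr q φ ih =>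
      intro B Bq X hX
      simp only [trPre, S1SE.freeSO, Finset.mem_erase] at hX
      rcases ih B (insert q Bq) X hX.2 with ⟨q', hq', h'⟩
      rcases Finset.mem_insert.mp hq' with h'' | h''
      · exact absurd (h'' ▸ h') hX.1
      · exact ⟨q', h'', h'⟩
  | allPr q φ ih =>
      intro B Bq X hX
      simp only [trPre, S1SE.freeSO, Finset.mem_erase] at hX
      rcases ih B (insert q Bq) X hX.2 with ⟨q', hq', h'⟩
      rcases Finset.mem_insert.mp hq' with h'' | h''
      · exact absurd (h'' ▸ h') hX.1
      · exact ⟨q', h'', h'⟩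
  | atom a π => intro B Bq; exact trB_freeSO B Bq _ 0 0 1
  | prop q => intro B Bq; exact trB_freeSO B Bq _ 0 0 1
  | not φ ih => intro B Bq; exact trB_freeSO B Bq _ 0 0 1
  | or φ ψ ih1 ih2 => intro B Bq; exact trB_freeSO B Bq _ 0 0 1
  | next φ ih => intro B Bq; exact trB_freeSO B Bq _ 0 0 1
  | untl φ ψ ih1 ih2 => intro B Bq; exact trB_freeSO B Bq _ 0 0 1

lemma trPre_sat (T : Set (Trace AP)) (φ : HQPTL AP) (hpre : φ.prenex) :
    ∀ (B Bq : Finset ℕ) (V : ℕ → Trace AP) (P : ℕ → ℕ → Prop)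
      (v1 : ℕ → Trace AP × ℕ) (v2 : ℕ → Set (Trace AP × ℕ)),
      (v1 0).1 ∈ T → (v1 0).2 = 0 →
      (∀ π ∈ B, V π ∈ T) → (∀ π ∉ B, V π = fun _ => (∅ : Set AP)) →
      (∀ q ∉ Bq, ∀ n, ¬ P q n) →
      (∀ π ∈ B, v1 (2*π+1) = (V π, 0)) →
      (∀ q ∈ Bq, ∀ n, P q n ↔ ∃ pr ∈ v2 (2*q), pr.1 ∈ T ∧ pr.2 = n) →
      (HQPTL.sat T V P 0 φ ↔ S1SE.sat T v1 v2 (trPre φ B Bq)) := by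
  induction φ with
  | exTr π φ ih =>
      intro B Bq V P v1 v2 hcT hc0 hBV hBc hQc hB hQ
      have hpre' : φ.prenex := hpre
      simp only [trPre, HQPTL.sat, S1SE.sat, sat_aand, S1STerm.val,
        Function.update_self]
      have key : ∀ t : Trace AP, t ∈ T →
          (HQPTL.sat T (Function.update V π t) P 0 φ ↔
            S1SE.sat T (Function.update v1 (2*π+1) (t, 0)) v2
              (trPre φ (insert π B) Bq)) := by
        intro t htT
        refine ih hpre' (insert π B) Bq _ P _ v2
          (by rw [Function.update_of_ne (by omega : 0 ≠ 2*π+1)]; exact hcT)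
          (by rw [Function.update_of_ne (by omega : 0 ≠ 2*π+1)]; exact hc0)
          ?_ ?_ hQc ?_ hQ
        · intro π' hπ'
          by_cases hππ : π' = π
          · subst hππ; rw [Function.update_self]; exact htT
          · rw [Function.update_of_ne hππ]
            exact hBV π' ((Finset.mem_insert.mp hπ').resolve_left hππ)
        · intro π' hπ'
          have h1 : π' ≠ π := fun hc => hπ' (hc ▸ Finset.mem_insert_self π B)
          have h2 : π' ∉ B := fun hc => hπ' (Finset.mem_insert_of_mem hc)
          rw [Function.update_of_ne h1]; exact hBc π' h2
        · intro π' hπ'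
          by_cases hππ : π' = π
          · subst hππ; rw [Function.update_self, Function.update_self]
          · have h2 : π' ∈ B := (Finset.mem_insert.mp hπ').resolve_left hππ
            rw [Function.update_of_ne (by omega : 2*π'+1 ≠ 2*π+1),
              Function.update_of_ne hππ]
            exact hB π' h2
      constructor
      · rintro ⟨t, htT, hsat⟩
        exact ⟨(t, 0), htT, rfl, ((key t htT).mp hsat)⟩
      · rintro ⟨p, hpT, heq, hsat⟩
        have hp : p = (p.1, 0) := heq
        refine ⟨p.1, hpT, (key p.1 hpT).mpr ?_⟩
        rwa [← hp]
  | allTr π φ ih =>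
      intro B Bq V P v1 v2 hcT hc0 hBV hBc hQc hB hQ
      have hpre' : φ.prenex := hpre
      simp only [trPre, HQPTL.sat, S1SE.sat, sat_aand, S1STerm.val,
        Function.update_self]
      have key : ∀ t : Trace AP, t ∈ T →
          (HQPTL.sat T (Function.update V π t) P 0 φ ↔
            S1SE.sat T (Function.update v1 (2*π+1) (t, 0)) v2
              (trPre φ (insert π B) Bq)) := by
        intro t htT
        refine ih hpre' (insert π B) Bq _ P _ v2
          (by rw [Function.update_of_ne (by omega : 0 ≠ 2*π+1)]; exact hcT)
          (by rw [Function.update_of_ne (by omega : 0 ≠ 2*π+1)]; exact hc0)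
          ?_ ?_ hQc ?_ hQ
        · intro π' hπ'
          by_cases hππ : π' = π
          · subst hππ; rw [Function.update_self]; exact htT
          · rw [Function.update_of_ne hππ]
            exact hBV π' ((Finset.mem_insert.mp hπ').resolve_left hππ)
        · intro π' hπ'
          have h1 : π' ≠ π := fun hc => hπ' (hc ▸ Finset.mem_insert_self π B)
          have h2 : π' ∉ B := fun hc => hπ' (Finset.mem_insert_of_mem hc)
          rw [Function.update_of_ne h1]; exact hBc π' h2
        · intro π' hπ'
          by_cases hππ : π' = π
          · subst hππ; rw [Function.update_self, Function.update_self]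
          · have h2 : π' ∈ B := (Finset.mem_insert.mp hπ').resolve_left hππ
            rw [Function.update_of_ne (by omega : 2*π'+1 ≠ 2*π+1),
              Function.update_of_ne hππ]
            exact hB π' h2
      constructor
      · intro hall
        rintro ⟨p, hpT, heq, hnsat⟩
        have hp : p = (p.1, 0) := heq
        apply hnsat
        rw [hp]
        exact (key p.1 hpT).mp (hall p.1 hpT)
      · intro hnex t htT
        by_contra hnsat
        exact hnex ⟨(t, 0), htT, rfl, fun hs => hnsat ((key t htT).mpr hs)⟩
  | exPr q φ ih =>
      intro B Bq V P v1 v2 hcT hc0 hBV hBc hQc hB hQ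
      have hpre' : φ.prenex := hpre
      simp only [trPre, HQPTL.sat, S1SE.sat]
      have key : ∀ (p : ℕ → Prop) (A : Set (Trace AP × ℕ)),
          (∀ pr ∈ A, pr.1 ∈ T) →
          (∀ n, p n ↔ ∃ pr ∈ A, pr.1 ∈ T ∧ pr.2 = n) →
          (HQPTL.sat T V (Function.update P q p) 0 φ ↔
            S1SE.sat T v1 (Function.update v2 (2*q) A) (trPre φ B (insert q Bq))) := by
        intro p A hAT hrel
        refine ih hpre' B (insert q Bq) V _ v1 _ hcT hc0 hBV hBc ?_ hB ?_
        · intro q' hq'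
          have h1 : q' ≠ q := fun hc => hq' (hc ▸ Finset.mem_insert_self q Bq)
          have h2 : q' ∉ Bq := fun hc => hq' (Finset.mem_insert_of_mem hc)
          rw [Function.update_of_ne h1]; exact hQc q' h2
        · intro q' hq'
          by_cases hqq : q' = q
          · subst hqq
            rw [Function.update_self]
            intro n
            rw [show Function.update v2 (2*q') A (2*q') = A from Function.update_self _ _ _]
            exact hrel n
          · have h2 : q' ∈ Bq := (Finset.mem_insert.mp hq').resolve_left hqq
            rw [Function.update_of_ne hqq,
              show Function.update v2 (2*q) A (2*q') = v2 (2*q') from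
                Function.update_of_ne (by omega : 2*q' ≠ 2*q) _ _]
            exact hQ q' h2
      constructor
      · rintro ⟨p, hsat⟩
        refine ⟨{pr | pr.1 ∈ T ∧ p pr.2}, fun pr hpr => hpr.1, ?_⟩
        rw [← key p _ (fun pr hpr => hpr.1) ?_]
        · exact hsat
        · intro n
          constructor
          · intro hn; exact ⟨((v1 0).1, n), ⟨hcT, hn⟩, hcT, rfl⟩
          · rintro ⟨pr, ⟨-, hp⟩, -, h2⟩; exact h2 ▸ hp
      · rintro ⟨A, hAT, hsat⟩
        refine ⟨fun n => ∃ pr ∈ A, pr.1 ∈ T ∧ pr.2 = n, ?_⟩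
        rw [key _ A hAT (fun n => Iff.rfl)]
        exact hsat
  | allPr q φ ih =>
      intro B Bq V P v1 v2 hcT hc0 hBV hBc hQc hB hQ
      have hpre' : φ.prenex := hpre
      simp only [trPre, HQPTL.sat, S1SE.sat]
      have key : ∀ (p : ℕ → Prop) (A : Set (Trace AP × ℕ)),
          (∀ pr ∈ A, pr.1 ∈ T) →
          (∀ n, p n ↔ ∃ pr ∈ A, pr.1 ∈ T ∧ pr.2 = n) →
          (HQPTL.sat T V (Function.update P q p) 0 φ ↔
            S1SE.sat T v1 (Function.update v2 (2*q) A) (trPre φ B (insert q Bq))) := by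
        intro p A hAT hrel
        refine ih hpre' B (insert q Bq) V _ v1 _ hcT hc0 hBV hBc ?_ hB ?_
        · intro q' hq'
          have h1 : q' ≠ q := fun hc => hq' (hc ▸ Finset.mem_insert_self q Bq)
          have h2 : q' ∉ Bq := fun hc => hq' (Finset.mem_insert_of_mem hc)
          rw [Function.update_of_ne h1]; exact hQc q' h2
        · intro q' hq'
          by_cases hqq : q' = q
          · subst hqq
            rw [Function.update_self]
            intro n
            rw [show Function.update v2 (2*q') A (2*q') = A from Function.update_self _ _ _]
            exact hrel n
          · have h2 : q' ∈ Bq := (Finset.mem_insert.mp hq').resolve_left hqq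
            rw [Function.update_of_ne hqq,
              show Function.update v2 (2*q) A (2*q') = v2 (2*q') from
                Function.update_of_ne (by omega : 2*q' ≠ 2*q) _ _]
            exact hQ q' h2
      constructor
      · intro hall
        rintro ⟨A, hAT, hnsat⟩
        apply hnsat
        rw [← key _ A hAT (fun n => Iff.rfl)]
        exact hall _
      · intro hnex p
        by_contra hnsat
        apply hnex
        have hrel : ∀ n, p n ↔
            ∃ pr ∈ ({pr | pr.1 ∈ T ∧ p pr.2} : Set (Trace AP × ℕ)),
              pr.1 ∈ T ∧ pr.2 = n := by
          intro n
          constructor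
          · intro hn; exact ⟨((v1 0).1, n), ⟨hcT, hn⟩, hcT, rfl⟩
          · rintro ⟨pr, ⟨-, hp⟩, -, h2⟩; exact h2 ▸ hp
        refine ⟨{pr | pr.1 ∈ T ∧ p pr.2}, fun pr hpr => hpr.1, fun hs => hnsat ?_⟩
        rw [key p _ (fun pr hpr => hpr.1) hrel]
        exact hs
  | atom a π =>
      intro B Bq V P v1 v2 hcT hc0 hBV hBc hQc hB hQ
      exact trB_sat T B Bq V P hBV hBc hQc _ (show (HQPTL.atom a π).qfree from trivial) 0 0 1 (by omega) 0 v1 v2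
        (by simpa using hcT) (by simp [hc0]) hB hQ
  | prop q =>
      intro B Bq V P v1 v2 hcT hc0 hBV hBc hQc hB hQ
      exact trB_sat T B Bq V P hBV hBc hQc _ (show (HQPTL.prop q).qfree from trivial) 0 0 1 (by omega) 0 v1 v2
        (by simpa using hcT) (by simp [hc0]) hB hQ
  | not φ ih =>
      intro B Bq V P v1 v2 hcT hc0 hBV hBc hQc hB hQ
      exact trB_sat T B Bq V P hBV hBc hQc _ hpre 0 0 1 (by omega) 0 v1 v2
        (by simpa using hcT) (by simp [hc0]) hB hQ
  | or φ ψ ih1 ih2 =>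
      intro B Bq V P v1 v2 hcT hc0 hBV hBc hQc hB hQ
      exact trB_sat T B Bq V P hBV hBc hQc _ hpre 0 0 1 (by omega) 0 v1 v2
        (by simpa using hcT) (by simp [hc0]) hB hQ
  | next φ ih =>
      intro B Bq V P v1 v2 hcT hc0 hBV hBc hQc hB hQ
      exact trB_sat T B Bq V P hBV hBc hQc _ hpre 0 0 1 (by omega) 0 v1 v2
        (by simpa using hcT) (by simp [hc0]) hB hQ
  | untl φ ψ ih1 ih2 =>
      intro B Bq V P v1 v2 hcT hc0 hBV hBc hQc hB hQ
      exact trB_sat T B Bq V P hBV hBc hQc _ hpre 0 0 1 (by omega) 0 v1 v2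
        (by simpa using hcT) (by simp [hc0]) hB hQ

/-- a closed, universally true S1S[E] formula -/
@[irreducible] def ttF : S1SE AP := .not (.exFO 0 (.not (.eq (.var 0) (.var 0))))

/-- "T is nonempty" -/
@[irreducible] def neT : S1SE AP := .exFO 0 (.eq (.var 0) (.var 0))

/-- the main translation: a clock variable pinned at time 0 of some trace,
followed by the translated prefix and body -/
@[irreducible] def psiMain (φ : HQPTL AP) : S1SE AP :=
  .exFO 0 (aand (.eq (.var 0) (.min 0)) (trPre φ ∅ ∅))

/-- the full translation, with an empty-trace-set correction `c` -/
def psiAll (φ : HQPTL AP) (c : S1SE AP) : S1SE AP :=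
  .or (psiMain φ) (aand (.not neT) c)

@[simp] lemma ttF_sat (T : Set (Trace AP)) (v1 v2) : S1SE.sat T v1 v2 ttF := by
  unfold ttF; simp [S1SE.sat]

@[simp] lemma neT_sat (T : Set (Trace AP)) (v1 v2) :
    S1SE.sat T v1 v2 neT ↔ T.Nonempty := by
  unfold neT
  simp only [S1SE.sat]
  constructor
  · rintro ⟨p, hpT, -⟩; exact ⟨p.1, hpT⟩
  · rintro ⟨t, ht⟩; exact ⟨(t, 0), ht, trivial⟩

lemma ttF_closed : (ttF : S1SE AP).closed := by
  unfold ttF; constructor <;> simp [S1SE.freeFO, S1SE.freeSO, S1STerm.fv]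

lemma neT_closed : (neT : S1SE AP).closed := by
  unfold neT; constructor <;> simp [S1SE.freeFO, S1SE.freeSO, S1STerm.fv]

lemma psiMain_closed (φ : HQPTL AP) : (psiMain φ).closed := by
  unfold psiMain
  constructor
  · rw [Finset.eq_empty_iff_forall_notMem]
    intro x hx
    simp only [S1SE.freeFO, freeFO_aand, Finset.mem_erase,
      Finset.mem_union, S1STerm.fv, Finset.mem_singleton] at hx
    rcases hx with ⟨hne, (h | h) | h⟩
    · exact hne h
    · exact hne h
    · rcases trPre_freeFO φ ∅ ∅ x h with h' | ⟨π, hπ, -⟩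
      · exact hne h'
      · exact absurd hπ (Finset.notMem_empty π)
  · rw [Finset.eq_empty_iff_forall_notMem]
    intro X hX
    simp only [S1SE.freeSO, freeSO_aand, Finset.mem_union,
      Finset.notMem_empty, false_or] at hX
    rcases trPre_freeSO φ ∅ ∅ X hX with ⟨q, hq, -⟩
    exact absurd hq (Finset.notMem_empty q)

lemma psiAll_closed (φ : HQPTL AP) (c : S1SE AP) (hc : c.closed) :
    (psiAll φ c).closed := by
  have h1 := psiMain_closed φ
  have h2 := neT_closed (AP := AP)
  constructor
  · simp only [psiAll, S1SE.freeFO, freeFO_aand, h1.1, h2.1, hc.1]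
    simp
  · simp only [psiAll, S1SE.freeSO, freeSO_aand, h1.2, h2.2, hc.2]
    simp

lemma psiMain_sat (T : Set (Trace AP)) (φ : HQPTL AP) (hpre : φ.prenex) (v1 v2) :
    S1SE.sat T v1 v2 (psiMain φ) ↔ T.Nonempty ∧ HQPTL.models T φ := by
  unfold psiMain
  simp only [S1SE.sat, sat_aand, S1STerm.val, Function.update_self]
  constructor
  · rintro ⟨p, hpT, heq, hsat⟩
    have hp2 : p.2 = 0 := congrArg Prod.snd heq
    refine ⟨⟨p.1, hpT⟩, ?_⟩
    exact (trPre_sat T φ hpre ∅ ∅ _ _ (Function.update v1 0 p) v2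
      (by rw [Function.update_self]; exact hpT)
      (by rw [Function.update_self]; exact hp2)
      (by simp) (fun _ _ => rfl) (fun _ _ _ => not_false)
      (by simp) (by simp)).mpr hsat
  · rintro ⟨⟨t, htT⟩, hm⟩
    refine ⟨(t, 0), htT, rfl, ?_⟩
    exact (trPre_sat T φ hpre ∅ ∅ _ _ (Function.update v1 0 (t, 0)) v2
      (by rw [Function.update_self]; exact htT)
      (by rw [Function.update_self])
      (by simp) (fun _ _ => rfl) (fun _ _ _ => not_false)
      (by simp) (by simp)).mp hm

end S1SEaux

/-- S1S[E] is at least as expressive as HyperQPTL. -/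
theorem s1sE_subsumes_hyperQPTL (AP : Type) [Fintype AP]
    (φ : HQPTL AP) (hφ : φ.prenex) :
    ∃ ψ : S1SE AP, ψ.closed ∧
      ∀ T : Set (Trace AP), HQPTL.models T φ ↔ S1SE.models T ψ := by
  classical
  by_cases h0 : HQPTL.models (∅ : Set (Trace AP)) φ
  · refine ⟨S1SEaux.psiAll φ S1SEaux.ttF, S1SEaux.psiAll_closed φ _ S1SEaux.ttF_closed, ?_⟩
    intro T
    simp only [S1SE.models, S1SEaux.psiAll, S1SE.sat, S1SEaux.sat_aand,
      S1SEaux.psiMain_sat T φ hφ, S1SEaux.neT_sat, S1SEaux.ttF_sat, and_true]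
    by_cases hne : T.Nonempty
    · simp [hne, HQPTL.models]
    · rw [Set.not_nonempty_iff_eq_empty] at hne
      subst hne
      simp [h0, HQPTL.models, Set.not_nonempty_empty]
      exact h0
  · refine ⟨S1SEaux.psiAll φ (S1SE.not S1SEaux.ttF),
      S1SEaux.psiAll_closed φ _ ⟨S1SEaux.ttF_closed.1, S1SEaux.ttF_closed.2⟩, ?_⟩
    intro T
    simp only [S1SE.models, S1SEaux.psiAll, S1SE.sat, S1SEaux.sat_aand,
      S1SEaux.psiMain_sat T φ hφ, S1SEaux.neT_sat, S1SEaux.ttF_sat, not_true,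
      and_false, or_false]
    by_cases hne : T.Nonempty
    · simp [hne, HQPTL.models]
    · rw [Set.not_nonempty_iff_eq_empty] at hne
      subst hne
      simp [HQPTL.models, Set.not_nonempty_empty]
      exact h0
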